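/- Suppose α > 1, δ ∈ (0,1) with α(1-δ) > 1, and c₁ ≥ α/(α(1-δ) - 1), c₂ ≥ 0. Then for all real n, n_o, n_e ≥ 0 with n_e ≥ (1-δ)·n and n_e ≥ n_o, n + c₁(1/α)n + c₁(1-1/α)n_o + c₂n_o − c₁(n_e − n_o) ≤ (c₁(2 - 1/α) + c₂)·n_o. -/
import Mathlib

theorem stmt_15 (α δ c₁ c₂ : ℝ) (hα : 1 < α) (hδ0 : 0 < δ) (hδ1 : δ < 1)
    (h : 1 < α * (1 - δ)) (hc₁ : c₁ ≥ α / (α * (1 - δ) - 1)) (hc₂ : 0 ≤ c₂) :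
    ∀ n n_o n_e : ℝ, 0 ≤ n → 0 ≤ n_o → 0 ≤ n_e → (1 - δ) * n ≤ n_e → n_o ≤ n_e →
      n + c₁ * (1/α) * n + c₁ * (1 - 1/α) * n_o + c₂ * n_o - c₁ * (n_e - n_o)
        ≤ (c₁ * (2 - 1/α) + c₂) * n_o := by
  intro n n_o n_e hn hno hne h1 h2
  have hd : 0 < α * (1 - δ) - 1 := by linarith
  have hkey : α ≤ c₁ * (α * (1 - δ) - 1) := by
    rw [ge_iff_le, div_le_iff₀ hd] at hc₁; linarith
  have hc1pos : 0 < c₁ := by nlinarith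
  have hαpos : (0:ℝ) < α := by linarith
  have hcne : c₁ * ((1 - δ) * n) ≤ c₁ * n_e := by
    exact mul_le_mul_of_nonneg_left h1 hc1pos.le
  have : n * α + c₁ * n ≤ c₁ * (1 - δ) * n * α := by nlinarith
  have hfinal : n + c₁ * (1/α) * n ≤ c₁ * n_e := by
    have heq : n + c₁ * (1/α) * n = (n * α + c₁ * n) / α := by field_simp
    rw [heq, div_le_iff₀ hαpos]
    nlinarith
  nlinarith
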